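/- Let (γ_n : n ∈ ℕ) and (ã_n : n ∈ ℕ₀) be positive sequences with γ_n → ∞ and γ_n(1 − ã_{n−1}/ã_n) → κ for some κ > 0. If γ_n/n → ∞, then Σ_{n=0}^∞ 1/ã_n = ∞. -/

import Mathlib

set_option maxHeartbeats 1000000

open Filter

/-- If `γ_n → ∞`, `γ_n (1 − ã_{n−1}/ã_n) → κ > 0` and `γ_n / n → ∞`, then
`∑ 1/ã_n = ∞`. -/
theorem not_summable_inv_of_gamma_div_n_tendsto_atTop
    (γ : ℕ → ℝ) (a : ℕ → ℝ) (κ : ℝ) (hκ : 0 < κ)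
    (hγpos : ∀ n, 0 < γ n) (hapos : ∀ n, 0 < a n)
    (hγ : Tendsto γ atTop atTop)
    (hlim : Tendsto (fun n => γ (n + 1) * (1 - a n / a (n + 1))) atTop (nhds κ))
    (hbig : Tendsto (fun n => γ n / n) atTop atTop) :
    ¬ Summable (fun n => 1 / a n) := by
  -- eventually γ(n+1)(1 - a n/a(n+1)) ≤ 2κ
  have h1 : ∀ᶠ n in atTop, γ (n + 1) * (1 - a n / a (n + 1)) ≤ 2 * κ :=
    hlim.eventually (eventually_le_nhds (by linarith))
  -- eventually 16κ(n+1) ≤ γ(n+1)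
  have hbig' : Tendsto (fun n : ℕ => γ (n + 1) / ((n + 1 : ℕ) : ℝ)) atTop atTop :=
    hbig.comp (tendsto_add_atTop_nat 1)
  have h2 : ∀ᶠ n : ℕ in atTop, 16 * κ * ((n : ℝ) + 1) ≤ γ (n + 1) := by
    filter_upwards [hbig'.eventually_ge_atTop (16 * κ)] with n hn
    have hpos : (0:ℝ) < (n : ℝ) + 1 := by positivity
    have : 16 * κ ≤ γ (n + 1) / ((n : ℝ) + 1) := by
      simpa using hn
    calc 16 * κ * ((n : ℝ) + 1) ≤ (γ (n + 1) / ((n : ℝ) + 1)) * ((n : ℝ) + 1) := by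
          exact mul_le_mul_of_nonneg_right this hpos.le
      _ = γ (n + 1) := by field_simp
  obtain ⟨N, hN⟩ := (h1.and h2).exists_forall_of_atTop
  -- key one-step estimate
  have key : ∀ n, N ≤ n → a (n + 1) ^ 2 * ((n : ℝ) + 1) ≤ a n ^ 2 * ((n : ℝ) + 2) := by
    intro n hn
    obtain ⟨hA, hB⟩ := hN n hn
    set m : ℝ := (n : ℝ) + 1 with hm
    have hm1 : (1:ℝ) ≤ m := by simp [hm]
    have hγp : 0 < γ (n + 1) := hγpos _
    have hap : 0 < a n := hapos n
    have hap1 : 0 < a (n + 1) := hapos (n + 1)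
    -- 1 - a n / a (n+1) ≤ 2κ/γ(n+1) ≤ 1/(8m)
    have e1 : 1 - a n / a (n + 1) ≤ 2 * κ / γ (n + 1) :=
      (le_div_iff₀' hγp).2 hA
    have e2 : 2 * κ / γ (n + 1) ≤ 1 / (8 * m) := by
      rw [div_le_div_iff₀ hγp (by positivity)]
      nlinarith [hB]
    have e3 : 1 - 1 / (8 * m) ≤ a n / a (n + 1) := by linarith
    have e4 : a (n + 1) * (1 - 1 / (8 * m)) ≤ a n := by
      have := mul_le_mul_of_nonneg_left e3 hap1.le
      calc a (n + 1) * (1 - 1 / (8 * m)) ≤ a (n + 1) * (a n / a (n + 1)) := this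
        _ = a n := by field_simp
    have hfac : (0:ℝ) < 1 - 1 / (8 * m) := by
      have : 1 / (8 * m) ≤ 1 / 8 := by
        apply div_le_div_of_nonneg_left <;> linarith
      linarith
    have e5 : a (n + 1) ^ 2 * (1 - 1 / (8 * m)) ^ 2 ≤ a n ^ 2 := by
      nlinarith [e4, mul_pos hap1 hfac]
    -- (1 - 1/(8m))² (m+1) ≥ m
    have e6 : m ≤ (1 - 1 / (8 * m)) ^ 2 * (m + 1) := by
      have hm0 : (0:ℝ) < m := by linarith
      have htm : (1 / (8 * m)) * m = 1 / 8 := by field_simp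
      have ht8 : 1 / (8 * m) ≤ 1 / 8 := by
        apply div_le_div_of_nonneg_left <;> linarith
      nlinarith [htm, ht8,
        mul_nonneg (sq_nonneg (1 / (8 * m))) (by linarith : (0:ℝ) ≤ m + 1)]
    calc a (n + 1) ^ 2 * m ≤ a (n + 1) ^ 2 * ((1 - 1 / (8 * m)) ^ 2 * (m + 1)) :=
          mul_le_mul_of_nonneg_left e6 (by positivity)
      _ = a (n + 1) ^ 2 * (1 - 1 / (8 * m)) ^ 2 * (m + 1) := by ring
      _ ≤ a n ^ 2 * (m + 1) := mul_le_mul_of_nonneg_right e5 (by positivity)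
      _ = a n ^ 2 * ((n : ℝ) + 2) := by rw [hm]; ring
  -- induction: a n ² (N+1) ≤ a N ² (n+1) for n ≥ N
  have grow : ∀ n, N ≤ n → a n ^ 2 * ((N : ℝ) + 1) ≤ a N ^ 2 * ((n : ℝ) + 1) := by
    intro n hn
    induction n, hn using Nat.le_induction with
    | base => exact le_rfl
    | succ n hn ih =>
      have hk := key n hn
      have h1 : (0:ℝ) < (n:ℝ) + 1 := by positivity
      have c1 : a (n+1)^2 * ((N:ℝ)+1) * ((n:ℝ)+1) ≤ a N ^ 2 * ((n:ℝ)+2) * ((n:ℝ)+1) := by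
        calc a (n+1)^2 * ((N:ℝ)+1) * ((n:ℝ)+1) = (a (n+1)^2 * ((n:ℝ)+1)) * ((N:ℝ)+1) := by ring
          _ ≤ (a n^2 * ((n:ℝ)+2)) * ((N:ℝ)+1) := mul_le_mul_of_nonneg_right hk (by positivity)
          _ = (a n^2 * ((N:ℝ)+1)) * ((n:ℝ)+2) := by ring
          _ ≤ (a N^2 * ((n:ℝ)+1)) * ((n:ℝ)+2) := mul_le_mul_of_nonneg_right ih (by positivity)
          _ = a N ^ 2 * ((n:ℝ)+2) * ((n:ℝ)+1) := by ring
      have c2 := le_of_mul_le_mul_right c1 h1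
      push_cast
      linarith
  -- now comparison
  intro hs
  set C : ℝ := Real.sqrt (a N ^ 2 / ((N : ℝ) + 1)) with hC
  have hCpos : 0 < C := Real.sqrt_pos.2 (div_pos (pow_pos (hapos N) 2) (by positivity))
  have hbound : ∀ n, N ≤ n → a n ≤ C * Real.sqrt ((n : ℝ) + 1) := by
    intro n hn
    have h2 : (0:ℝ) < (N:ℝ) + 1 := by positivity
    have : a n ^ 2 ≤ (a N ^ 2 / ((N : ℝ) + 1)) * ((n : ℝ) + 1) := by
      rw [div_mul_eq_mul_div, le_div_iff₀ h2]
      linarith [grow n hn]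
    calc a n = Real.sqrt (a n ^ 2) := (Real.sqrt_sq (hapos n).le).symm
      _ ≤ Real.sqrt ((a N ^ 2 / ((N : ℝ) + 1)) * ((n : ℝ) + 1)) := Real.sqrt_le_sqrt this
      _ = C * Real.sqrt ((n : ℝ) + 1) := Real.sqrt_mul (by positivity) _
  -- Summable (1/a (n+N)) and 1/(C √(n+N+1)) ≤ 1/a(n+N)
  have hs' : Summable (fun n => 1 / a (n + N)) := (summable_nat_add_iff N).2 hs
  have hcomp : Summable (fun n : ℕ => 1 / (C * Real.sqrt ((n + N : ℕ) + 1))) := by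
    apply Summable.of_nonneg_of_le (fun n => by positivity) _ hs'
    intro n
    apply one_div_le_one_div_of_le (hapos _)
    exact hbound (n + N) (Nat.le_add_left N n)
  have hsq : Summable (fun n : ℕ => 1 / Real.sqrt ((n + N : ℕ) + 1)) := by
    have := hcomp.mul_left C
    convert this using 2 with n
    · rfl
    rw [mul_one_div, div_mul_cancel_left₀ hCpos.ne', one_div]
  -- shift: fun n => 1 / √(n+1) is the (N)-shift... get Summable of 1/√(n) overall
  have hf : Summable (fun n : ℕ => 1 / Real.sqrt (n : ℝ)) := by
    have h1 : Summable (fun n : ℕ => 1 / Real.sqrt ((n + (N+1) : ℕ) : ℝ)) := by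
      convert hsq using 2 with n
      push_cast
      ring_nf
    exact (summable_nat_add_iff (N+1)).1 h1
  -- contradiction with divergence of Σ 1/√n
  have : ¬ Summable (fun n : ℕ => 1 / Real.sqrt (n : ℝ)) := by
    intro h
    have h2 : Summable (fun n : ℕ => 1 / (n : ℝ) ^ ((1:ℝ)/2)) := by
      convert h using 2 with n
      rw [Real.sqrt_eq_rpow]
    rw [Real.summable_one_div_nat_rpow] at h2
    linarith
  exact this hf
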